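/- Let L(x) = Σ_{i=0}^{3m-1} c_i x^{2^i} be an invertible F_2-linear map on F_{2^{3m}} and let a ∈ F_{2^{3m}}^× be an element not contained in any proper subfield of F_{2^m} (with a ∈ F_{2^m}). If there exists a' with L(ax) = a'·L(x) for all x, then there exists k such that a' = a^{2^k} and c_i = 0 for all i not congruent to k modulo m. -/

import Mathlib

open Polynomial

-- helper: multiples
lemma pow_two_pow_mul {K : Type*} [CommRing K] (a : K) (x q : ℕ) (h : a ^ 2 ^ x = a) :
    a ^ 2 ^ (x * q) = a := by
  induction q with
  | zero => simp
  | succ q ih =>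
    have : x * (q + 1) = x * q + x := by ring
    rw [this, pow_add, pow_mul, ih, h]

lemma pow_two_pow_mod {K : Type*} [CommRing K] (a : K) (x y : ℕ) (hx : a ^ 2 ^ x = a)
    (hy : a ^ 2 ^ y = a) : a ^ 2 ^ (y % x) = a := by
  have h1 : a ^ 2 ^ (x * (y / x)) = a := pow_two_pow_mul a x (y / x) hx
  calc a ^ 2 ^ (y % x) = (a ^ 2 ^ (x * (y / x))) ^ 2 ^ (y % x) := by rw [h1]
    _ = a ^ 2 ^ (x * (y / x) + y % x) := by rw [← pow_mul, ← pow_add]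
    _ = a := by rw [Nat.div_add_mod, hy]

lemma pow_two_pow_gcd {K : Type*} [CommRing K] (a : K) (x y : ℕ) (hx : a ^ 2 ^ x = a)
    (hy : a ^ 2 ^ y = a) : a ^ 2 ^ (Nat.gcd x y) = a := by
  induction x, y using Nat.gcd.induction with
  | H0 n => simpa using hy
  | H1 m n hpos ih =>
    rw [Nat.gcd_rec]
    exact ih (pow_two_pow_mod a m n hx hy) hx

/-- if an invertible linearized polynomial map
`L(x) = Σ_{i<3m} c_i x^{2^i}` on `F_{2^{3m}}` satisfies `L(ax) = a'·L(x)` for an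
element `a ∈ F_{2^m}` lying in no proper subfield of `F_{2^m}`, then `a' = a^{2^k}`
for some `k` and `c_i = 0` for all `i ≢ k (mod m)`. -/
theorem stmt15 (m : ℕ) (hm : 0 < m)
    (K : Type*) [Field K] [Fintype K] [CharP K 2]
    (hcard : Fintype.card K = 2 ^ (3 * m))
    (cc : Fin (3 * m) → K) (L : K → K)
    (hL : ∀ x : K, L x = ∑ i : Fin (3 * m), cc i * x ^ 2 ^ (i : ℕ))
    (hbij : Function.Bijective L)
    (a : K) (ha : a ≠ 0) (ham : a ^ 2 ^ m = a)
    (hgen : ∀ l, l ∣ m → a ^ 2 ^ l = a → l = m)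
    (a' : K) (ha' : ∀ x : K, L (a * x) = a' * L x) :
    ∃ k : Fin (3 * m), a' = a ^ 2 ^ (k : ℕ) ∧
      ∀ i : Fin (3 * m), (i : ℕ) % m ≠ (k : ℕ) % m → cc i = 0 := by
  -- key divisibility fact
  have hdvd : ∀ l : ℕ, a ^ 2 ^ l = a → m ∣ l := by
    intro l hl
    have hg : a ^ 2 ^ (Nat.gcd l m) = a := pow_two_pow_gcd a l m hl ham
    have := hgen (Nat.gcd l m) (Nat.gcd_dvd_right l m) hg
    exact this ▸ Nat.gcd_dvd_left l m
  -- frobenius injectivity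
  have hinj : ∀ (n : ℕ) (x y : K), x ^ 2 ^ n = y ^ 2 ^ n → x = y := by
    intro n x y h
    have h2 : (x + y) ^ 2 ^ n = 0 := by
      rw [add_pow_char_pow, h, CharTwo.add_self_eq_zero]
    have h3 := pow_eq_zero_iff (n := 2 ^ n) (by positivity) |>.mp h2
    have h4 : y = -x := by linear_combination h3
    rw [h4, CharTwo.neg_eq]
  -- reduce exponent mod m
  have hmod : ∀ i : ℕ, a ^ 2 ^ i = a ^ 2 ^ (i % m) := by
    intro i
    calc a ^ 2 ^ i = a ^ 2 ^ (m * (i / m) + i % m) := by rw [Nat.div_add_mod]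
      _ = (a ^ 2 ^ (m * (i / m))) ^ 2 ^ (i % m) := by rw [← pow_mul, ← pow_add]
      _ = a ^ 2 ^ (i % m) := by rw [pow_two_pow_mul a m (i / m) ham]
  -- equal powers give equal residues
  have hres : ∀ i j : ℕ, a ^ 2 ^ i = a ^ 2 ^ j → i % m = j % m := by
    have key : ∀ r s : ℕ, r ≤ s → r < m → s < m → a ^ 2 ^ r = a ^ 2 ^ s → r = s := by
      intro r s hrs hr hs h
      have h1 : (a ^ 2 ^ (s - r)) ^ 2 ^ r = a ^ 2 ^ r := by
        rw [← pow_mul, ← pow_add, Nat.sub_add_cancel hrs, h]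
      have h2 : a ^ 2 ^ (s - r) = a := hinj r _ _ h1
      have h3 := hdvd _ h2
      have h4 : s - r = 0 := Nat.eq_zero_of_dvd_of_lt h3 (by omega)
      omega
    intro i j h
    have h' : a ^ 2 ^ (i % m) = a ^ 2 ^ (j % m) := by rw [← hmod, ← hmod, h]
    rcases le_total (i % m) (j % m) with hle | hle
    · exact key _ _ hle (Nat.mod_lt _ hm) (Nat.mod_lt _ hm) h'
    · exact (key _ _ hle (Nat.mod_lt _ hm) (Nat.mod_lt _ hm) h'.symm).symm
  -- coefficient equations
  have hcoeff : ∀ i : Fin (3 * m), cc i * a ^ 2 ^ (i : ℕ) = a' * cc i := by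
    set P : K[X] := ∑ i : Fin (3 * m),
      C (cc i * a ^ 2 ^ (i : ℕ) - a' * cc i) * X ^ (2 ^ (i : ℕ)) with hP
    have heval : ∀ x : K, P.eval x = 0 := by
      intro x
      have h1 := ha' x
      rw [hL (a * x), hL x, Finset.mul_sum] at h1
      simp only [hP, eval_finset_sum, eval_mul, eval_C, eval_pow, eval_X]
      have : ∑ i : Fin (3 * m), (cc i * a ^ 2 ^ (i : ℕ) - a' * cc i) * x ^ 2 ^ (i : ℕ)
          = ∑ i : Fin (3 * m), cc i * (a * x) ^ 2 ^ (i : ℕ)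
            - ∑ i : Fin (3 * m), a' * (cc i * x ^ 2 ^ (i : ℕ)) := by
        rw [← Finset.sum_sub_distrib]
        congr 1; ext i; rw [mul_pow]; ring
      rw [this, h1, sub_self]
    have hdeg : P.natDegree < 2 ^ (3 * m) := by
      have : P.natDegree ≤ 2 ^ (3 * m) - 1 := by
        apply natDegree_sum_le_of_forall_le
        intro i _
        refine (natDegree_C_mul_le _ _).trans ?_
        rw [natDegree_X_pow]
        have : (i : ℕ) ≤ 3 * m - 1 := by omega
        calc 2 ^ (i : ℕ) ≤ 2 ^ (3 * m - 1) := Nat.pow_le_pow_right (by norm_num) (by omega)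
          _ ≤ 2 ^ (3 * m) - 1 := by
            have h1 : 2 ^ (3 * m - 1) < 2 ^ (3 * m) := Nat.pow_lt_pow_right (by norm_num) (by omega)
            omega
      have h2 : 0 < 2 ^ (3 * m) := Nat.pow_pos (by norm_num)
      omega
    have hP0 : P = 0 := by
      apply Polynomial.eq_zero_of_forall_eval_zero_of_natDegree_lt_card P heval
      rw [Cardinal.mk_fintype, hcard]
      exact_mod_cast hdeg
    intro i
    have hc : P.coeff (2 ^ (i : ℕ)) = 0 := by rw [hP0]; simp
    rw [hP, Polynomial.finset_sum_coeff] at hc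
    simp only [coeff_C_mul, coeff_X_pow] at hc
    rw [Finset.sum_eq_single i] at hc
    · rw [if_pos rfl, mul_one] at hc
      linear_combination hc
    · intro j _ hj
      rw [if_neg, mul_zero]
      exact fun h => hj (Fin.ext (Nat.pow_right_injective (le_refl 2) h.symm))
    · intro h; exact absurd (Finset.mem_univ i) h
  -- some coefficient is nonzero
  obtain ⟨x, hx⟩ : ∃ x : K, L x = 1 := hbij.2 1
  have hex : ∃ k : Fin (3 * m), cc k ≠ 0 := by
    by_contra h
    push_neg at h
    rw [hL x] at hx
    simp [h] at hx
  obtain ⟨k, hk⟩ := hex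
  have h2 : a ^ 2 ^ (k : ℕ) = a' := mul_right_cancel₀ hk (by linear_combination hcoeff k)
  refine ⟨k, h2.symm, ?_⟩
  intro i hi
  by_contra hcc
  have h1 : a ^ 2 ^ (i : ℕ) = a' := mul_right_cancel₀ hcc (by linear_combination hcoeff i)
  exact hi (hres _ _ (h1.trans h2.symm))
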